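/- Let n ≥ 1 and let A be the n × n matrix with A(k,l) = 1 if (a + k) + i(b + l) is a Gaussian prime and 0 otherwise, where z = a + bi is a fixed Gaussian integer with a ≥ 0, b ≥ 0 and a + b > 0 even. Let P be the diagonal matrix with entries P(j,j) = (−1)^j. Then PA + AP = 0. -/

import Mathlib

lemma gaussian_aux (x y : ℤ) (hx : 1 ≤ x) (hy : 1 ≤ y) (hne : ¬(x = 1 ∧ y = 1))
    (hz : Irreducible ((⟨x, y⟩ : GaussianInt))) : Odd (x + y) := by
  rcases Int.even_or_odd (x + y) with hev | hodd
  swap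
  · exact hodd
  exfalso
  rcases Int.even_or_odd x with hxe | hxo
  · have hye : Even y := (Int.even_add.mp hev).mp hxe
    obtain ⟨u, hu⟩ := hxe
    obtain ⟨v, hv⟩ := hye
    have hfac : (⟨x, y⟩ : GaussianInt) = ⟨2, 0⟩ * ⟨u, v⟩ := by
      ext <;> simp [Zsqrtd.re_mul, Zsqrtd.im_mul] <;> omega
    rcases hz.isUnit_or_isUnit hfac with h | h
    · have h1 := Zsqrtd.norm_eq_one_iff.mpr h
      simp [Zsqrtd.norm] at h1
    · have h1 := Zsqrtd.norm_eq_one_iff.mpr h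
      have hunorm : ((⟨u, v⟩ : GaussianInt)).norm = u * u + v * v := by
        simp [Zsqrtd.norm]
      rw [hunorm] at h1
      have hu1 : 1 ≤ u := by omega
      have hv1 : 1 ≤ v := by omega
      have h2 : u * u + v * v ≥ 2 := by nlinarith
      omega
  · have hyo : Odd y := by
      rcases Int.even_or_odd y with hye | hyo
      · exact absurd ((Int.even_add.mp hev).mpr hye) (Int.not_even_iff_odd.mpr hxo)
      · exact hyo
    obtain ⟨s, hs⟩ := hxo
    obtain ⟨t, ht⟩ := hyo
    have hfac : (⟨x, y⟩ : GaussianInt) = ⟨1, 1⟩ * ⟨s + t + 1, t - s⟩ := by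
      ext <;> simp [Zsqrtd.re_mul, Zsqrtd.im_mul] <;> omega
    rcases hz.isUnit_or_isUnit hfac with h | h
    · have h1 := Zsqrtd.norm_eq_one_iff.mpr h
      simp [Zsqrtd.norm] at h1
    · have h1 := Zsqrtd.norm_eq_one_iff.mpr h
      have hnorm : ((⟨s + t + 1, t - s⟩ : GaussianInt)).norm
          = (s + t + 1) * (s + t + 1) + (t - s) * (t - s) := by
        simp [Zsqrtd.norm]; ring
      rw [hnorm] at h1
      rcases Int.natAbs_eq_iff.mp h1 with h2 | h2
      · push_cast at h2
        have hst : 1 ≤ s + t + 1 := by omega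
        have hA : 1 ≤ (s + t + 1) * (s + t + 1) := by nlinarith
        have hB : (t - s) * (t - s) = 0 := by nlinarith [mul_self_nonneg (t - s)]
        have hts : t - s = 0 := mul_self_eq_zero.mp hB
        have : s + t + 1 = 1 := by nlinarith [mul_self_nonneg (s + t)]
        exact hne ⟨by omega, by omega⟩
      · push_cast at h2
        nlinarith [mul_self_nonneg (s + t + 1), mul_self_nonneg (t - s)]

open scoped Classical in
theorem gaussian_prime_matrix_anticommutes (n : ℕ) (a b : ℤ)
    (ha : 0 ≤ a) (hb : 0 ≤ b) (hpos : 0 < a + b) (heven : Even (a + b))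
    (A P : Matrix (Fin n) (Fin n) ℤ)
    (hA : ∀ k l : Fin n,
      A k l = if Irreducible ((⟨a + ((k : ℕ) + 1), b + ((l : ℕ) + 1)⟩ : GaussianInt))
              then 1 else 0)
    (hP : ∀ j j' : Fin n, P j j' = if j = j' then (-1) ^ ((j : ℕ) + 1) else 0) :
    P * A + A * P = 0 := by
  ext k l
  have hPA : (P * A) k l = (-1) ^ ((k : ℕ) + 1) * A k l := by
    rw [Matrix.mul_apply, Finset.sum_eq_single k]
    · rw [hP]; simp
    · intro j _ hj; rw [hP]; simp [Ne.symm hj]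
    · intro h; exact absurd (Finset.mem_univ k) h
  have hAP : (A * P) k l = A k l * (-1) ^ ((l : ℕ) + 1) := by
    rw [Matrix.mul_apply, Finset.sum_eq_single l]
    · rw [hP]; simp
    · intro j _ hj; rw [hP]; simp [hj]
    · intro h; exact absurd (Finset.mem_univ l) h
  simp only [Matrix.add_apply, Matrix.zero_apply, hPA, hAP]
  rcases eq_or_ne (A k l) 0 with h0 | h0
  · simp [h0]
  · have hz : Irreducible ((⟨a + ((k : ℕ) + 1), b + ((l : ℕ) + 1)⟩ : GaussianInt)) := by
      by_contra hc
      rw [hA, if_neg hc] at h0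
      exact h0 rfl
    have hk0 : (0 : ℤ) ≤ (k : ℕ) := Int.natCast_nonneg _
    have hl0 : (0 : ℤ) ≤ (l : ℕ) := Int.natCast_nonneg _
    have hodd := gaussian_aux (a + ((k : ℕ) + 1)) (b + ((l : ℕ) + 1))
      (by omega) (by omega) (by rintro ⟨h1, h2⟩; omega) hz
    have hkl : Odd (((k : ℕ) + 1) + ((l : ℕ) + 1) : ℤ) := by
      rcases heven with ⟨c, hc⟩
      rcases hodd with ⟨m, hm⟩
      exact ⟨m - c, by omega⟩
    have hkl' : Odd (((k : ℕ) + 1) + ((l : ℕ) + 1)) := by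
      have := Int.odd_coe_nat (((k : ℕ) + 1) + ((l : ℕ) + 1))
      push_cast at hkl
      rw [← this] at *
      push_cast
      exact hkl
    rcases Nat.even_or_odd ((k : ℕ) + 1) with hke | hko
    · have hlo : Odd ((l : ℕ) + 1) := by
        rcases Nat.even_or_odd ((l : ℕ) + 1) with he | ho
        · exact absurd (Even.add hke he) (Nat.not_even_iff_odd.mpr hkl')
        · exact ho
      rw [Even.neg_one_pow hke, Odd.neg_one_pow hlo]; ring
    · have hle : Even ((l : ℕ) + 1) := by
        rcases Nat.even_or_odd ((l : ℕ) + 1) with he | ho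
        · exact he
        · exact absurd (Odd.add_odd hko ho) (by simpa using (Nat.not_even_iff_odd.mpr hkl'))
      rw [Odd.neg_one_pow hko, Even.neg_one_pow hle]; ring
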